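/- Let r, s be real numbers such that nr + ms ∉ ℤ for every pair of integers (n,m) ≠ (0,0), and let T(x,y) = (x+r, y+s). Then there is no exchange of three pieces R conjugate to T with p_R(2) ≤ 4. Combined with the fact that p^T(1) ≥ 3 and the strict monotonicity of the complexity, this gives p^T(2) ≥ 5 for the complexity function associated to T. -/

import Mathlib

open MeasureTheory Filter Topology

noncomputable section

/-- The inclusion of `ℤ × ℤ` into `ℝ × ℝ`. -/
def latVec (v : ℤ × ℤ) : ℝ × ℝ := ((v.1 : ℝ), (v.2 : ℝ))

/-- An exchange of `m` pieces of the plane adapted to a measurable map `T` of the plane: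
measurable pieces `D i`, pairwise almost disjoint, whose union has Lebesgue measure 1 and is
almost surely a fundamental domain for `ℤ²`, together with integer vectors `vec i` and the
exchange map `R` acting on the union of the pieces by `R x = T x - vec i` for `x ∈ D i`,
preserving Lebesgue measure.  `C` is the coding map: `C x k` records the piece containing
`R^[k] x`. -/
structure PieceExchange (T : ℝ × ℝ → ℝ × ℝ) (m : ℕ) where
  D : Fin m → Set (ℝ × ℝ)
  vec : Fin m → ℤ × ℤ
  R : ℝ × ℝ → ℝ × ℝ
  C : ℝ × ℝ → ℕ → Fin m
  measD : ∀ i, MeasurableSet (D i)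
  aeDisjoint : ∀ i j, i ≠ j → volume (D i ∩ D j) = 0
  measure_union : volume (⋃ i, D i) = 1
  fundamental :
    volume {x | x ∈ ⋃ i, D i ∧ ∃ y ∈ ⋃ i, D i, y ≠ x ∧ ∃ a b : ℤ, x - y = ((a : ℝ), (b : ℝ))} = 0
  measR : Measurable R
  measC : Measurable C
  mem_code : ∀ x ∈ ⋃ i, D i, ∀ k : ℕ, R^[k] x ∈ D (C x k)
  R_eq : ∀ x ∈ ⋃ i, D i, ∀ k : ℕ, R (R^[k] x) = T (R^[k] x) - latVec (vec (C x k))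
  meas_pres : ∀ A : Set (ℝ × ℝ), MeasurableSet A →
    volume ((⋃ i, D i) ∩ R ⁻¹' A) = volume ((⋃ i, D i) ∩ A)

namespace PieceExchange

variable {T : ℝ × ℝ → ℝ × ℝ} {m : ℕ}

/-- The domain of the exchange: the union of the pieces. -/
def domain (E : PieceExchange T m) : Set (ℝ × ℝ) := ⋃ i, E.D i

/-- The exchange is conjugate to `T` when the coding map is injective off a Lebesgue-null set. -/
def Conjugate (E : PieceExchange T m) : Prop :=
  volume {x | x ∈ E.domain ∧ ∃ y ∈ E.domain, y ≠ x ∧ E.C y = E.C x} = 0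

/-- The language of the exchange: all finite factors of coding sequences. -/
def lang (E : PieceExchange T m) : Set (List (Fin m)) :=
  {w | ∃ n k : ℕ, ∃ x ∈ E.domain, w = (List.range n).map fun j => E.C x (k + j)}

/-- The complexity of the exchange: the number of words of length `n` in its language. -/
def complexity (E : PieceExchange T m) (n : ℕ) : ℕ :=
  Nat.card {w : List (Fin m) // w ∈ E.lang ∧ w.length = n}


-- new development
variable (E : PieceExchange T m)

def nu (E : PieceExchange T m) : Measure (ℝ × ℝ) := volume.restrict E.domain

lemma measDomain : MeasurableSet E.domain := MeasurableSet.iUnion fun i => E.measD i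

lemma nu_univ : E.nu Set.univ = 1 := by
  rw [nu, Measure.restrict_apply_univ]; exact E.measure_union

instance : IsProbabilityMeasure E.nu := ⟨E.nu_univ⟩

lemma nu_le_volume (A : Set (ℝ × ℝ)) : E.nu A ≤ volume A :=
  Measure.restrict_le_self A

lemma ae_mem_domain : ∀ᵐ x ∂E.nu, x ∈ E.domain :=
  ae_restrict_mem E.measDomain

lemma map_R_nu : Measure.map E.R E.nu = E.nu := by
  refine Measure.ext fun A hA => ?_
  rw [Measure.map_apply E.measR hA, nu, Measure.restrict_apply hA,
    Measure.restrict_apply (E.measR hA), Set.inter_comm, Set.inter_comm A,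
    show E.domain = ⋃ i, E.D i from rfl, E.meas_pres A hA]

lemma measR_iter (k : ℕ) : Measurable (E.R^[k]) := E.measR.iterate k

lemma map_R_iter_nu (k : ℕ) : Measure.map (E.R^[k]) E.nu = E.nu := by
  induction k with
  | zero => simp
  | succ n ih =>
    rw [Function.iterate_succ']
    rw [← Measure.map_map E.measR (E.measR_iter n), ih, E.map_R_nu]

lemma nu_preimage_iter (k : ℕ) {A : Set (ℝ × ℝ)} (hA : MeasurableSet A) :
    E.nu (E.R^[k] ⁻¹' A) = E.nu A := by
  rw [← E.map_R_iter_nu k, Measure.map_apply (E.measR_iter k) hA, E.map_R_iter_nu k]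


/-- The class of points whose coding starts with letter `i` at position `k`. -/
def cls (E : PieceExchange T m) (k : ℕ) (i : Fin m) : Set (ℝ × ℝ) := {x | E.C x k = i}

lemma measCk (k : ℕ) : Measurable (fun x => E.C x k) :=
  (measurable_pi_apply k).comp E.measC

lemma measCls (k : ℕ) (i : Fin m) : MeasurableSet (E.cls k i) :=
  (E.measCk k) (MeasurableSet.singleton i)

def mu (E : PieceExchange T m) (i : Fin m) : ENNReal := E.nu (E.cls 0 i)

def mij (E : PieceExchange T m) (i j : Fin m) : ENNReal :=
  E.nu (E.cls 0 i ∩ E.cls 1 j)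

lemma sum_mu : ∑ i, E.mu i = 1 := by
  have : Set.univ = ⋃ i, E.cls 0 i := by
    ext x; simp [cls]
  rw [← E.nu_univ, this, measure_iUnion ?_ (fun i => E.measCls 0 i), tsum_fintype]
  · rfl
  · intro i j hij
    refine Set.disjoint_left.2 fun x hx hx' => hij ?_
    rw [← hx, ← hx']

lemma sum_mij_right (i : Fin m) : ∑ j, E.mij i j = E.mu i := by
  have : E.cls 0 i = ⋃ j, (E.cls 0 i ∩ E.cls 1 j) := by
    ext x; simp [cls]
  rw [mu, this, measure_iUnion ?_ (fun j => (E.measCls 0 i).inter (E.measCls 1 j)), tsum_fintype]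
  · rfl
  · intro a b hab
    refine Set.disjoint_left.2 fun x hx hx' => hab ?_
    rw [← hx.2, ← hx'.2]

lemma mem_domain_R (x : ℝ × ℝ) (hx : x ∈ E.domain) : E.R x ∈ E.domain := by
  have := E.mem_code x hx 1
  rw [Function.iterate_one] at this
  exact Set.mem_iUnion.2 ⟨_, this⟩

lemma ae_shift (k : ℕ) : ∀ᵐ x ∂E.nu, E.C (E.R x) k = E.C x (k + 1) := by
  have h1 : ∀ᵐ x ∂E.nu, ∀ (i j : Fin m), i ≠ j → E.R^[k+1] x ∉ E.D i ∩ E.D j := by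
    rw [ae_all_iff]; intro i
    rw [ae_all_iff]; intro j
    by_cases hij : i = j
    · filter_upwards with x h; exact absurd hij h
    · have hnull : E.nu (E.R^[k+1] ⁻¹' (E.D i ∩ E.D j)) = 0 := by
        rw [E.nu_preimage_iter (k+1) ((E.measD i).inter (E.measD j))]
        exact le_antisymm (le_trans (E.nu_le_volume _) (le_of_eq (E.aeDisjoint i j hij)))
          zero_le
      filter_upwards [(ae_iff.2 (by simp only [not_not]; exact hnull) : ∀ᵐ x ∂E.nu, x ∉ E.R^[k+1] ⁻¹' (E.D i ∩ E.D j))] with x hx _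
      exact hx
  filter_upwards [E.ae_mem_domain, h1] with x hx hx2
  by_contra hne
  have hRx : E.R x ∈ E.domain := E.mem_domain_R x hx
  have m1 : E.R^[k+1] x ∈ E.D (E.C x (k+1)) := E.mem_code x hx (k+1)
  have m2 : E.R^[k] (E.R x) ∈ E.D (E.C (E.R x) k) := E.mem_code (E.R x) hRx k
  rw [← Function.iterate_succ_apply] at m2
  exact hx2 _ _ hne ⟨m2, m1⟩

lemma nu_cls_shift (k : ℕ) (i : Fin m) : E.nu (E.cls (k+1) i) = E.nu (E.cls k i) := by
  have : E.cls (k+1) i =ᵐ[E.nu] E.R ⁻¹' (E.cls k i) := by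
    filter_upwards [E.ae_shift k] with x hx
    show (E.C x (k+1) = i) = (E.C (E.R x) k = i)
    rw [hx]
  rw [measure_congr this, ← Measure.map_apply E.measR (E.measCls k i), E.map_R_nu]

lemma nu_cls_k (k : ℕ) (i : Fin m) : E.nu (E.cls k i) = E.mu i := by
  induction k with
  | zero => rfl
  | succ n ih => rw [E.nu_cls_shift n i, ih]

lemma sum_mij_left (j : Fin m) : ∑ i, E.mij i j = E.mu j := by
  have : E.cls 1 j = ⋃ i, (E.cls 0 i ∩ E.cls 1 j) := by
    ext x; simp [cls]
  have h2 : E.nu (E.cls 1 j) = ∑ i, E.mij i j := by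
    rw [this, measure_iUnion ?_ (fun i => (E.measCls 0 i).inter (E.measCls 1 j)), tsum_fintype]
    · rfl
    · intro a b hab
      refine Set.disjoint_left.2 fun x hx hx' => hab ?_
      rw [← hx.1, ← hx'.1]
  rw [← h2, E.nu_cls_k 1 j]

lemma mij_le_mu_left (i j : Fin m) : E.mij i j ≤ E.mu i := by
  rw [← E.sum_mij_right i]
  exact Finset.single_le_sum (f := fun j => E.mij i j) (fun _ _ => zero_le) (Finset.mem_univ j)

lemma mij_le_mu_right (i j : Fin m) : E.mij i j ≤ E.mu j := by
  rw [← E.sum_mij_left j]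
  exact Finset.single_le_sum (f := fun i => E.mij i j) (fun _ _ => zero_le) (Finset.mem_univ i)


lemma pair_null (i j : Fin m) (h : E.mij i j = 0) (k : ℕ) :
    E.nu (E.cls k i ∩ E.cls (k+1) j) = 0 := by
  induction k with
  | zero => exact h
  | succ n ih =>
    have hae : ((E.cls (n+1) i ∩ E.cls (n+2) j : Set (ℝ × ℝ))) =ᵐ[E.nu]
        ((E.R ⁻¹' (E.cls n i ∩ E.cls (n+1) j) : Set (ℝ × ℝ))) := by
      filter_upwards [E.ae_shift n, E.ae_shift (n+1)] with x h1 h2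
      show (E.C x (n+1) = i ∧ E.C x (n+2) = j) = (E.C (E.R x) n = i ∧ E.C (E.R x) (n+1) = j)
      rw [h1, h2]
    rw [measure_congr hae, ← Measure.map_apply E.measR
      ((E.measCls n i).inter (E.measCls (n+1) j)), E.map_R_nu, ih]

lemma ae_pair_pos : ∀ᵐ x ∂E.nu, ∀ k, E.mij (E.C x k) (E.C x (k+1)) ≠ 0 := by
  rw [ae_all_iff]
  intro k
  rw [ae_iff]
  push_neg
  have hnull : E.nu (⋃ i, ⋃ j,
      if E.mij i j = 0 then (E.cls k i ∩ E.cls (k+1) j) else ∅) = 0 := by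
    refine measure_iUnion_null fun i => measure_iUnion_null fun j => ?_
    by_cases h : E.mij i j = 0
    · rw [if_pos h]; exact E.pair_null i j h k
    · rw [if_neg h]; simp
  refine measure_mono_null (fun x hx => ?_) hnull
  simp only [Set.mem_setOf_eq, not_not] at hx
  refine Set.mem_iUnion.2 ⟨E.C x k, Set.mem_iUnion.2 ⟨E.C x (k+1), ?_⟩⟩
  rw [if_pos hx]
  exact ⟨rfl, rfl⟩

lemma deterministic_contra (hconj : E.Conjugate) (σ : Fin m → Fin m)
    (hσ : ∀ i j, E.mij i j ≠ 0 → j = σ i) : False := by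
  set Fstar : Set (ℝ × ℝ) := {x : ℝ × ℝ | ∀ k, E.C x (k+1) = σ (E.C x k)} with hFdef
  have hFeq : Fstar = ⋂ (k : ℕ), ⋃ (i : Fin m), (E.cls k i ∩ E.cls (k+1) (σ i)) := by
    ext x
    simp only [hFdef, Set.mem_setOf_eq, Set.mem_iInter, Set.mem_iUnion]
    constructor
    · intro h k
      exact ⟨E.C x k, rfl, h k⟩
    · intro h k
      obtain ⟨i, hi1, hi2⟩ := h k
      have : E.C x k = i := hi1
      rw [this]
      exact hi2
  have hFmeas : MeasurableSet Fstar := by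
    rw [hFeq]
    exact MeasurableSet.iInter fun k => MeasurableSet.iUnion fun i =>
      (E.measCls k i).inter (E.measCls (k+1) (σ i))
  have hFae : ∀ᵐ x ∂E.nu, x ∈ Fstar := by
    filter_upwards [E.ae_pair_pos] with x hx
    intro k
    exact hσ _ _ (hx k)
  have hdet : ∀ x ∈ Fstar, ∀ k, E.C x k = σ^[k] (E.C x 0) := by
    intro x hx k
    induction k with
    | zero => rfl
    | succ n ih => rw [hx n, ih, Function.iterate_succ_apply']
  set K := fun i => Fstar ∩ E.cls 0 i ∩ E.domain with hKdef
  have hKuniv : (⋃ i, K i) = Fstar ∩ E.domain := by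
    ext x
    simp only [Set.mem_iUnion, hKdef, Set.mem_inter_iff]
    constructor
    · rintro ⟨i, ⟨h1, _⟩, h3⟩; exact ⟨h1, h3⟩
    · rintro ⟨h1, h3⟩; exact ⟨E.C x 0, ⟨h1, rfl⟩, h3⟩
  have h4 : E.nu (Fstar ∩ E.domain) = 1 := by
    rw [← E.nu_univ]
    apply measure_congr
    filter_upwards [hFae, E.ae_mem_domain] with x h1 h2
    show (x ∈ Fstar ∩ E.domain) = (x ∈ Set.univ)
    simp [Set.mem_inter_iff, h1, h2]
  have hpos : ∃ i, E.nu (K i) ≠ 0 := by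
    by_contra h
    push_neg at h
    have h0 : E.nu (⋃ i, K i) = 0 := measure_iUnion_null h
    rw [hKuniv, h4] at h0
    exact one_ne_zero h0
  obtain ⟨i₀, hi₀⟩ := hpos
  have hKinf : (K i₀).Infinite := by
    intro hfin
    exact hi₀ (le_antisymm (le_trans (E.nu_le_volume _)
      (le_of_eq (hfin.countable.measure_zero _))) zero_le)
  have hsub : K i₀ ⊆ {x | x ∈ E.domain ∧ ∃ y ∈ E.domain, y ≠ x ∧ E.C y = E.C x} := by
    intro x hx
    refine ⟨hx.2, ?_⟩
    obtain ⟨y, hy, hyx⟩ := (hKinf.diff (Set.finite_singleton x)).nonempty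
    refine ⟨y, hy.2, by simpa using hyx, ?_⟩
    funext k
    have hx0 : E.C x 0 = i₀ := hx.1.2
    have hy0 : E.C y 0 = i₀ := hy.1.2
    rw [hdet y hy.1.1 k, hdet x hx.1.1 k, hy0, hx0]
  exact hi₀ (le_antisymm (le_trans (E.nu_le_volume _)
    (le_trans (measure_mono hsub) (le_of_eq hconj))) zero_le)


lemma iter_mem_domain (x : ℝ × ℝ) (hx : x ∈ E.domain) (k : ℕ) : E.R^[k] x ∈ E.domain :=
  Set.mem_iUnion.2 ⟨_, E.mem_code x hx k⟩

/-- The zero-drift lemma: on an a.e. invariant set, the average displacement vanishes. -/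
lemma drift_zero (A : Set (ℝ × ℝ)) (hA : MeasurableSet A)
    (hinv : ((A : Set (ℝ × ℝ))) =ᵐ[E.nu] ((E.R ⁻¹' A : Set (ℝ × ℝ))))
    (g : ℝ × ℝ → ℝ) (hg : Measurable g) (F : Fin m → ℝ)
    (hF : ∀ x ∈ E.domain, g (E.R x) - g x = F (E.C x 0)) :
    ∑ i, (E.nu (A ∩ E.cls 0 i)).toReal * F i = 0 := by
  classical
  set νA := E.nu.restrict A with hνA
  have hfin : IsFiniteMeasure νA := by
    constructor
    rw [hνA, Measure.restrict_apply_univ]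
    exact lt_of_le_of_lt (le_trans (measure_mono (Set.subset_univ _)) (le_of_eq E.nu_univ))
      ENNReal.one_lt_top
  have hmapA : Measure.map E.R νA = νA := by
    refine Measure.ext fun S hS => ?_
    rw [Measure.map_apply E.measR hS, hνA, Measure.restrict_apply hS,
      Measure.restrict_apply (E.measR hS)]
    have e1 : ((E.R ⁻¹' S ∩ A : Set (ℝ × ℝ))) =ᵐ[E.nu]
        ((E.R ⁻¹' (S ∩ A) : Set (ℝ × ℝ))) := by
      have := (Filter.EventuallyEq.refl (ae E.nu) (E.R ⁻¹' S : Set (ℝ × ℝ))).inter hinv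
      simpa [Set.preimage_inter] using this
    rw [measure_congr e1, ← Measure.map_apply E.measR (hS.inter hA), E.map_R_nu]
  have hmapAk : ∀ k, Measure.map (E.R^[k]) νA = νA := by
    intro k
    induction k with
    | zero => simp
    | succ n ih =>
      rw [Function.iterate_succ', ← Measure.map_map E.measR (E.measR_iter n), ih, hmapA]
  set h : ℝ × ℝ → ℝ := fun x => g (E.R x) - g x with hh
  have hmeas_h : Measurable h := (hg.comp E.measR).sub hg
  have hdomA : ∀ᵐ x ∂νA, x ∈ E.domain := ae_restrict_of_ae E.ae_mem_domain
  set B : ℝ := ∑ i, |F i| with hB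
  have hFB : ∀ i, |F i| ≤ B := fun i =>
    Finset.single_le_sum (f := fun i => |F i|) (fun _ _ => abs_nonneg _) (Finset.mem_univ i)
  have hBnn : 0 ≤ B := Finset.sum_nonneg fun _ _ => abs_nonneg _
  have hbound : ∀ x ∈ E.domain, ∀ k, |h (E.R^[k] x)| ≤ B := by
    intro x hx k
    have hmem := E.iter_mem_domain x hx k
    rw [hh]
    simp only
    rw [hF _ hmem]
    exact hFB _
  have hInt_h : Integrable h νA := by
    refine Integrable.mono' (integrable_const B) hmeas_h.aestronglyMeasurable ?_
    filter_upwards [hdomA] with x hx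
    simpa using hbound x hx 0
  set c : ℝ := ∫ x, h x ∂νA with hc
  have hint_comp : ∀ k, Integrable (fun x => h (E.R^[k] x)) νA ∧
      ∫ x, h (E.R^[k] x) ∂νA = c := by
    intro k
    have ham : AEMeasurable (E.R^[k]) νA := (E.measR_iter k).aemeasurable
    have hsm : AEStronglyMeasurable h (Measure.map (E.R^[k]) νA) :=
      (hmapAk k).symm ▸ hInt_h.aestronglyMeasurable
    constructor
    · have := (integrable_map_measure hsm ham).mp ((hmapAk k).symm ▸ hInt_h)
      exact this
    · rw [hc, ← integral_map ham hsm, hmapAk k]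
  have htel : ∀ (n : ℕ) (x : ℝ × ℝ), g (E.R^[n] x) - g x
      = ∑ k ∈ Finset.range n, h (E.R^[k] x) := by
    intro n x
    induction n with
    | zero => simp
    | succ n ih =>
      rw [Finset.sum_range_succ, ← ih, Function.iterate_succ_apply']
      rw [hh]
      simp only
      ring
  have hIntS : ∀ n, Integrable (fun x => g (E.R^[n] x) - g x) νA := by
    intro n
    have : (fun x => g (E.R^[n] x) - g x)
        = fun x => ∑ k ∈ Finset.range n, h (E.R^[k] x) := funext fun x => htel n x
    rw [this]
    exact integrable_finset_sum _ fun k _ => (hint_comp k).1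
  have hintSn : ∀ n : ℕ, ∫ x, (g (E.R^[n] x) - g x) ∂νA = n * c := by
    intro n
    have : (fun x => g (E.R^[n] x) - g x)
        = fun x => ∑ k ∈ Finset.range n, h (E.R^[k] x) := funext fun x => htel n x
    rw [this, integral_finset_sum _ fun k _ => (hint_comp k).1]
    simp only [(hint_comp _).2]
    rw [Finset.sum_const, Finset.card_range, nsmul_eq_mul]
  -- c equals the sum in the statement
  have hcsum : c = ∑ i, (E.nu (A ∩ E.cls 0 i)).toReal * F i := by
    have he : h =ᵐ[νA] fun x => F (E.C x 0) := by
      filter_upwards [hdomA] with x hx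
      rw [hh]
      simp only
      rw [hF _ hx]
    rw [hc, integral_congr_ae he]
    have hsum : (fun x => F (E.C x 0))
        = fun x => ∑ i, Set.indicator (E.cls 0 i) (fun _ => F i) x := by
      funext x
      symm
      calc ∑ i, Set.indicator (E.cls 0 i) (fun _ => F i) x
          = ∑ i, if i = E.C x 0 then F i else 0 := by
            refine Finset.sum_congr rfl fun i _ => ?_
            rw [Set.indicator_apply]
            by_cases hix : E.C x 0 = i
            · rw [if_pos (show x ∈ E.cls 0 i from hix), if_pos hix.symm]
            · rw [if_neg (show x ∉ E.cls 0 i from hix), if_neg (fun hh => hix hh.symm)]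
        _ = F (E.C x 0) := by
            rw [Finset.sum_ite_eq' Finset.univ (E.C x 0) F, if_pos (Finset.mem_univ _)]
    rw [hsum, integral_finset_sum _ fun i _ =>
      (integrable_const (F i)).indicator (E.measCls 0 i)]
    refine Finset.sum_congr rfl fun i _ => ?_
    rw [integral_indicator_const _ (E.measCls 0 i), smul_eq_mul, measureReal_def, hνA,
      Measure.restrict_apply (E.measCls 0 i), Set.inter_comm, mul_comm]
  -- now show c = 0 by the tightness argument
  have hczero : c = 0 := by
    rw [← abs_nonpos_iff]
    refine le_of_forall_pos_le_add ?_
    intro ε hε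
    rw [zero_add]
    set Bp := B + 1 with hBp
    have hBp0 : 0 < Bp := lt_of_le_of_lt hBnn (by rw [hBp]; linarith)
    set δ := ε / (4 * Bp) with hδ
    have hδ0 : 0 < δ := div_pos hε (by linarith)
    -- find a cutoff M
    obtain ⟨M, hM⟩ : ∃ M : ℕ, νA {x | (M : ℝ) < |g x|} < ENNReal.ofReal δ := by
      have hVmeas : ∀ n : ℕ, MeasurableSet {x : ℝ × ℝ | (n : ℝ) < |g x|} := fun n =>
        measurableSet_lt measurable_const hg.abs
      have hanti : Antitone fun n : ℕ => {x : ℝ × ℝ | (n : ℝ) < |g x|} := by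
        intro a b hab x hx
        exact lt_of_le_of_lt (by exact_mod_cast hab : (a:ℝ) ≤ b) hx
      have hempty : ⋂ n : ℕ, {x : ℝ × ℝ | (n : ℝ) < |g x|} = ∅ := by
        ext x
        simp only [Set.mem_iInter, Set.mem_setOf_eq, Set.mem_empty_iff_false, iff_false,
          not_forall, not_lt]
        obtain ⟨n, hn⟩ := exists_nat_ge |g x|
        exact ⟨n, hn⟩
      have htend := tendsto_measure_iInter_atTop (μ := νA)
        (fun n => (hVmeas n).nullMeasurableSet) hanti ⟨0, measure_ne_top νA _⟩
      rw [hempty, measure_empty] at htend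
      have := htend.eventually_lt_const (by positivity : (0:ENNReal) < ENNReal.ofReal δ)
      exact this.exists
    set V := {x : ℝ × ℝ | (M : ℝ) < |g x|} with hV
    have hVmeas : MeasurableSet V := measurableSet_lt measurable_const hg.abs
    have hM0 : (0:ℝ) ≤ M := Nat.cast_nonneg M
    -- for each n, bound n * |c|
    have hkey : ∀ n : ℕ, (n:ℝ) * |c| ≤ 2 * M + (n:ℝ) * Bp * (2 * δ) := by
      intro n
      set bad := V ∪ (E.R^[n]) ⁻¹' V with hbad
      have hbadmeas : MeasurableSet bad := hVmeas.union ((E.measR_iter n) hVmeas)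
      have hbadsize : (νA bad).toReal ≤ 2 * δ := by
        have h1 : νA ((E.R^[n]) ⁻¹' V) = νA V := by
          rw [← Measure.map_apply (E.measR_iter n) hVmeas, hmapAk n]
        have h2 : νA bad ≤ ENNReal.ofReal δ + ENNReal.ofReal δ := by
          refine le_trans (measure_union_le _ _) ?_
          rw [h1]
          exact add_le_add hM.le hM.le
        rw [← ENNReal.ofReal_add hδ0.le hδ0.le] at h2
        refine le_trans (ENNReal.toReal_le_of_le_ofReal (by linarith) h2) (by linarith)
      have hptwise : ∀ᵐ x ∂νA, |g (E.R^[n] x) - g x|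
          ≤ 2 * M + ((n:ℝ) * Bp) * Set.indicator bad (fun _ => (1:ℝ)) x := by
        filter_upwards [hdomA] with x hx
        by_cases hxbad : x ∈ bad
        · rw [Set.indicator_of_mem hxbad]
          have : |g (E.R^[n] x) - g x| ≤ (n:ℝ) * B := by
            rw [htel n x]
            refine le_trans (Finset.abs_sum_le_sum_abs _ _) ?_
            calc ∑ k ∈ Finset.range n, |h (E.R^[k] x)| ≤ ∑ _k ∈ Finset.range n, B :=
                  Finset.sum_le_sum fun k _ => hbound x hx k
              _ = n * B := by rw [Finset.sum_const, Finset.card_range, nsmul_eq_mul]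
          refine le_trans this ?_
          have : (n:ℝ) * B ≤ (n:ℝ) * Bp := by
            refine mul_le_mul_of_nonneg_left ?_ (Nat.cast_nonneg n)
            rw [hBp]; linarith
          linarith
        · rw [Set.indicator_of_notMem hxbad, mul_zero, add_zero]
          rw [hbad, Set.mem_union] at hxbad
          push_neg at hxbad
          have hx1 : |g x| ≤ M := by
            have := hxbad.1
            rw [hV, Set.mem_setOf_eq, not_lt] at this
            exact this
          have hx2 : |g (E.R^[n] x)| ≤ M := by
            have := hxbad.2
            rw [Set.mem_preimage, hV, Set.mem_setOf_eq, not_lt] at this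
            exact this
          calc |g (E.R^[n] x) - g x| ≤ |g (E.R^[n] x)| + |g x| := abs_sub _ _
            _ ≤ 2 * M := by linarith
      have hRHSint : Integrable (fun x => 2 * (M:ℝ)
          + ((n:ℝ) * Bp) * Set.indicator bad (fun _ => (1:ℝ)) x) νA := by
        refine (integrable_const _).add ?_
        exact (((integrable_const (1:ℝ)).indicator hbadmeas).const_mul _)
      have h3 : |∫ x, (g (E.R^[n] x) - g x) ∂νA| ≤ 2 * M + (n:ℝ) * Bp * (2 * δ) := by
        have habs := norm_integral_le_integral_norm (μ := νA) (f := fun x => g (E.R^[n] x) - g x)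
        simp only [Real.norm_eq_abs] at habs
        refine le_trans habs ?_
        have h4 : ∫ x, |g (E.R^[n] x) - g x| ∂νA
            ≤ ∫ x, (2 * (M:ℝ) + ((n:ℝ) * Bp) * Set.indicator bad (fun _ => (1:ℝ)) x) ∂νA := by
          refine integral_mono_ae ((hIntS n).abs) hRHSint hptwise
        refine le_trans h4 ?_
        rw [integral_add (integrable_const _)
          (((integrable_const (1:ℝ)).indicator hbadmeas).const_mul _),
          integral_const, integral_const_mul, integral_indicator_const _ hbadmeas]
        simp only [smul_eq_mul, mul_one, measureReal_def]
        have hmass : (νA Set.univ).toReal ≤ 1 := by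
          have : νA Set.univ ≤ 1 := by
            rw [hνA, Measure.restrict_apply_univ]
            exact le_trans (measure_mono (Set.subset_univ _)) (le_of_eq E.nu_univ)
          exact le_trans (ENNReal.toReal_le_of_le_ofReal one_pos.le (by simpa using this))
            (by norm_num)
        have hnB : 0 ≤ (n:ℝ) * Bp := mul_nonneg (Nat.cast_nonneg n) hBp0.le
        have := mul_le_mul_of_nonneg_left hbadsize hnB
        nlinarith [hM0]
      rw [hintSn n, abs_mul, Nat.abs_cast] at h3
      exact h3
    -- choose n large
    obtain ⟨n, hn1, hn2⟩ : ∃ n : ℕ, 1 ≤ (n:ℝ) ∧ 4 * (M:ℝ) / ε ≤ n := by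
      obtain ⟨n, hn⟩ := exists_nat_ge (max 1 (4 * (M:ℝ) / ε))
      exact ⟨n, le_trans (le_max_left _ _) hn, le_trans (le_max_right _ _) hn⟩
    have := hkey n
    have hδB : Bp * (2 * δ) = ε / 2 := by
      rw [hδ]
      field_simp
      ring
    have hn0 : (0:ℝ) < n := lt_of_lt_of_le one_pos hn1
    have h2Mn : 2 * (M:ℝ) ≤ (n:ℝ) * (ε / 2) := by
      rw [div_le_iff₀ hε] at hn2
      nlinarith
    have : (n:ℝ) * |c| ≤ (n:ℝ) * ε := by
      calc (n:ℝ) * |c| ≤ 2 * M + (n:ℝ) * Bp * (2 * δ) := this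
        _ = 2 * M + (n:ℝ) * (ε / 2) := by rw [mul_assoc, hδB]
        _ ≤ (n:ℝ) * (ε/2) + (n:ℝ) * (ε / 2) := by linarith
        _ = (n:ℝ) * ε := by ring
    exact le_of_mul_le_mul_left this hn0
  rw [← hcsum, hczero]


lemma nu_lt_top (A : Set (ℝ × ℝ)) : E.nu A ≠ ⊤ :=
  ne_of_lt (lt_of_le_of_lt (le_trans (measure_mono (Set.subset_univ _))
    (le_of_eq E.nu_univ)) ENNReal.one_lt_top)

lemma sum_classes' (A : Set (ℝ × ℝ)) (hA : MeasurableSet A) :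
    ∑ i, E.nu (A ∩ E.cls 0 i) = E.nu A := by
  have h1 : A = ⋃ i, (A ∩ E.cls 0 i) := by
    ext x; simp [PieceExchange.cls]
  conv_rhs => rw [h1]
  rw [measure_iUnion ?_ (fun i => hA.inter (E.measCls 0 i)), tsum_fintype]
  intro a b hab
  refine Set.disjoint_left.2 fun x hx hx' => hab ?_
  rw [← hx.2, ← hx'.2]

lemma sum_classes (A : Set (ℝ × ℝ)) (hA : MeasurableSet A) :
    ∑ i, (E.nu (A ∩ E.cls 0 i)).toReal = (E.nu A).toReal := by
  rw [← E.sum_classes' A hA, ENNReal.toReal_sum]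
  intro a _
  exact E.nu_lt_top _


lemma mu_ne_top (i : Fin m) : E.mu i ≠ ⊤ := E.nu_lt_top _

lemma mij_zero_of_mu_left {i : Fin m} (h : E.mu i = 0) (j : Fin m) : E.mij i j = 0 :=
  le_antisymm (le_trans (E.mij_le_mu_left i j) (le_of_eq h)) zero_le

lemma mu_pos_of_mij {i j : Fin m} (h : E.mij i j ≠ 0) : E.mu i ≠ 0 ∧ E.mu j ≠ 0 :=
  ⟨fun h0 => h (E.mij_zero_of_mu_left h0 j),
   fun h0 => h (le_antisymm (le_trans (E.mij_le_mu_right i j) (le_of_eq h0)) zero_le)⟩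

/-- If the letter `b` forms a closed class for the transition structure, the set of points
whose coding starts with `b` is almost invariant. -/
lemma cls_closed_invariant (b : Fin m)
    (hout : ∀ j, j ≠ b → E.mij b j = 0) (hin : ∀ i, i ≠ b → E.mij i b = 0) :
    ((E.cls 0 b : Set (ℝ × ℝ))) =ᵐ[E.nu] ((E.R ⁻¹' (E.cls 0 b) : Set (ℝ × ℝ))) := by
  filter_upwards [E.ae_pair_pos, E.ae_shift 0] with x hx hs
  show (E.C x 0 = b) = (E.C (E.R x) 0 = b)
  rw [hs, eq_iff_iff]
  have hp := hx 0
  constructor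
  · intro h0
    by_contra h1
    exact hp (h0 ▸ hout _ h1)
  · intro h1
    by_contra h0
    exact hp (h1 ▸ hin _ h0)

/-- column sum reduced to three letters -/
lemma col3 (a b c : Fin m) (hab : a ≠ b) (hac : a ≠ c) (hbc : b ≠ c)
    (hPz : ∀ i, i ≠ a → i ≠ b → i ≠ c → E.mu i = 0) (v : Fin m) :
    E.mu v = E.mij a v + E.mij b v + E.mij c v := by
  classical
  rw [← E.sum_mij_left v]
  rw [show (Finset.univ : Finset (Fin m)) = Finset.univ from rfl]
  rw [← Finset.sum_subset (Finset.subset_univ ({a, b, c} : Finset (Fin m)))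
    (fun i _ hi => ?_)]
  · rw [Finset.sum_insert (by simp [hab, hac]), Finset.sum_pair hbc, add_assoc]
  · simp only [Finset.mem_insert, Finset.mem_singleton] at hi
    push_neg at hi
    exact E.mij_zero_of_mu_left (hPz i hi.1 hi.2.1 hi.2.2) v

/-- row sum for a letter with a unique out-neighbour -/
lemma row1 (b β : Fin m) (hb : ∀ j, E.mij b j ≠ 0 → j = β) : E.mu b = E.mij b β := by
  classical
  rw [← E.sum_mij_right b]
  refine Finset.sum_eq_single β (fun j _ hj => ?_) (fun h => absurd (Finset.mem_univ _) h)
  by_contra h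
  exact hj (hb j h)

lemma mij_single {b β j : Fin m} (hb : ∀ j, E.mij b j ≠ 0 → j = β) (hj : j ≠ β) :
    E.mij b j = 0 := by
  by_contra h
  exact hj (hb j h)

/-- every transition with positive mass contributes a word of length 2 to the language. -/
lemma edge_card_le (edges : Finset (Fin m × Fin m))
    (hedges : ∀ p ∈ edges, E.mij p.1 p.2 ≠ 0) : edges.card ≤ E.complexity 2 := by
  classical
  have hfin : Finite {w : List (Fin m) // w ∈ E.lang ∧ w.length = 2} := by
    have h2 : Finite {l : List (Fin m) | l.length = 2} :=
      (List.finite_length_eq (Fin m) 2).to_subtype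
    exact Finite.of_injective
      (fun w : {w : List (Fin m) // w ∈ E.lang ∧ w.length = 2} =>
        (⟨w.1, w.2.2⟩ : {l : List (Fin m) | l.length = 2}))
      (fun u v huv => by
        apply Subtype.ext
        have := congrArg Subtype.val huv
        simpa using this)
  -- for each edge pick a witness word
  have hwit : ∀ p ∈ edges, ([p.1, p.2] : List (Fin m)) ∈ E.lang := by
    intro p hp
    have hne : Set.Nonempty (E.cls 0 p.1 ∩ E.cls 1 p.2 ∩ E.domain) := by
      by_contra h
      rw [Set.not_nonempty_iff_eq_empty] at h
      refine hedges p hp ?_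
      rw [PieceExchange.mij, PieceExchange.nu,
        Measure.restrict_apply ((E.measCls 0 p.1).inter (E.measCls 1 p.2)), h, measure_empty]
    obtain ⟨x, ⟨⟨hx0, hx1⟩, hxd⟩⟩ := hne
    refine ⟨2, 0, x, hxd, ?_⟩
    have : (List.range 2) = [0, 1] := rfl
    rw [this]
    simp only [List.map_cons, List.map_nil]
    have h0 : E.C x (0 + 0) = p.1 := hx0
    have h1 : E.C x (0 + 1) = p.2 := hx1
    rw [h0, h1]
  set f : {p : Fin m × Fin m // p ∈ edges} → {w : List (Fin m) // w ∈ E.lang ∧ w.length = 2} :=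
    fun p => ⟨[p.1.1, p.1.2], hwit p.1 p.2, rfl⟩ with hf
  have hinj : Function.Injective f := by
    intro u v huv
    rw [hf] at huv
    simp only [Subtype.mk.injEq, List.cons.injEq, and_true] at huv
    exact Subtype.ext (Prod.ext huv.1 huv.2)
  calc edges.card = Nat.card {p : Fin m × Fin m // p ∈ edges} := by
        rw [Nat.card_eq_fintype_card, Fintype.card_coe]
    _ ≤ Nat.card {w : List (Fin m) // w ∈ E.lang ∧ w.length = 2} :=
        Nat.card_le_card_of_injective f hinj
    _ = E.complexity 2 := rfl


end PieceExchange

section Translation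

open PieceExchange

lemma key_rel (r s : ℝ)
    (hirr : ∀ p q : ℤ, (p, q) ≠ (0, 0) → ∀ k : ℤ, (p : ℝ) * r + (q : ℝ) * s ≠ (k : ℝ))
    (d : ℕ) (hd : 0 < d) (N w : ℤ × ℤ) (θ : ℝ)
    (h1 : (d : ℝ) * r = (N.1 : ℝ) + θ * (w.1 : ℝ))
    (h2 : (d : ℝ) * s = (N.2 : ℝ) + θ * (w.2 : ℝ)) : False := by
  by_cases hw : w.1 = 0 ∧ w.2 = 0
  · refine hirr d 0 ?_ N.1 ?_
    · simp only [ne_eq, Prod.mk.injEq, not_and]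
      intro hd0
      exact absurd hd0 (by exact_mod_cast hd.ne')
    · rw [hw.1] at h1
      push_cast at h1 ⊢
      linarith
  · refine hirr (d * w.2) (-(d * w.1)) ?_ (N.1 * w.2 - N.2 * w.1) ?_
    · simp only [ne_eq, Prod.mk.injEq, not_and, neg_eq_zero, mul_eq_zero]
      intro hq hp
      rcases hq with hq | hq
      · exact absurd hq (by exact_mod_cast hd.ne')
      · rcases hp with hp | hp
        · exact absurd hp (by exact_mod_cast hd.ne')
        · exact hw ⟨hp, hq⟩
    · push_cast
      linear_combination (w.2 : ℝ) * h1 - (w.1 : ℝ) * h2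

variable {m : ℕ} (r s : ℝ)
variable (E : PieceExchange (fun x : ℝ × ℝ => (x.1 + r, x.2 + s)) m)

lemma drift_fst (A : Set (ℝ × ℝ)) (hA : MeasurableSet A)
    (hinv : ((A : Set (ℝ × ℝ))) =ᵐ[E.nu] ((E.R ⁻¹' A : Set (ℝ × ℝ)))) :
    ∑ i, (E.nu (A ∩ E.cls 0 i)).toReal * (r - ((E.vec i).1 : ℝ)) = 0 := by
  refine E.drift_zero A hA hinv Prod.fst measurable_fst _ fun x hx => ?_
  have h0 := E.R_eq x hx 0
  rw [Function.iterate_zero_apply] at h0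
  rw [h0]
  show ((x.1 + r, x.2 + s) - latVec (E.vec (E.C x 0))).1 - x.1 = _
  simp only [latVec, Prod.fst_sub]
  ring

lemma drift_snd (A : Set (ℝ × ℝ)) (hA : MeasurableSet A)
    (hinv : ((A : Set (ℝ × ℝ))) =ᵐ[E.nu] ((E.R ⁻¹' A : Set (ℝ × ℝ)))) :
    ∑ i, (E.nu (A ∩ E.cls 0 i)).toReal * (s - ((E.vec i).2 : ℝ)) = 0 := by
  refine E.drift_zero A hA hinv Prod.snd measurable_snd _ fun x hx => ?_
  have h0 := E.R_eq x hx 0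
  rw [Function.iterate_zero_apply] at h0
  rw [h0]
  show ((x.1 + r, x.2 + s) - latVec (E.vec (E.C x 0))).2 - x.2 = _
  simp only [latVec, Prod.snd_sub]
  ring

lemma two_letter_contra
    (hirr : ∀ p q : ℤ, (p, q) ≠ (0, 0) → ∀ k : ℤ, (p : ℝ) * r + (q : ℝ) * s ≠ (k : ℝ))
    (A : Set (ℝ × ℝ)) (hA : MeasurableSet A)
    (hinv : ((A : Set (ℝ × ℝ))) =ᵐ[E.nu] ((E.R ⁻¹' A : Set (ℝ × ℝ))))
    (hApos : E.nu A ≠ 0) (a b : Fin m)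
    (hz : ∀ i, i ≠ a → i ≠ b → E.nu (A ∩ E.cls 0 i) = 0) : False := by
  classical
  set c : Fin m → ℝ := fun i => (E.nu (A ∩ E.cls 0 i)).toReal with hc
  have hM : ∑ i, c i = (E.nu A).toReal := E.sum_classes A hA
  set M := (E.nu A).toReal with hMdef
  have hMpos : 0 < M := ENNReal.toReal_pos hApos (E.nu_lt_top A)
  have hvanish : ∀ u : Fin m → ℝ, ∀ i ∈ Finset.univ,
      i ∉ ({a, b} : Finset (Fin m)) → c i * u i = 0 := by
    intro u i _ hi
    simp only [Finset.mem_insert, Finset.mem_singleton] at hi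
    push_neg at hi
    rw [hc]
    simp only
    rw [hz i hi.1 hi.2, ENNReal.toReal_zero, zero_mul]
  have hredsum : ∀ u : Fin m → ℝ,
      ∑ i, c i * u i = ∑ i ∈ ({a, b} : Finset (Fin m)), c i * u i := by
    intro u
    exact (Finset.sum_subset (Finset.subset_univ _) (hvanish u)).symm
  have h1 := drift_fst r s E A hA hinv
  have h2 := drift_snd r s E A hA hinv
  rw [hredsum (fun i => r - ((E.vec i).1 : ℝ))] at h1
  rw [hredsum (fun i => s - ((E.vec i).2 : ℝ))] at h2
  have hMab : ∑ i ∈ ({a, b} : Finset (Fin m)), c i = M := by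
    rw [← hM]
    refine Finset.sum_subset (Finset.subset_univ _) fun i h1' h2' => ?_
    have := hvanish (fun _ => (1:ℝ)) i h1' h2'
    rw [mul_one] at this
    exact this
  by_cases hab : a = b
  · subst hab
    rw [show ({a, a} : Finset (Fin m)) = {a} from
      Finset.insert_eq_self.mpr (Finset.mem_singleton_self a), Finset.sum_singleton]
      at h1 h2 hMab
    refine key_rel r s hirr 1 one_pos (E.vec a) ((0,0) : ℤ × ℤ) 0 ?_ ?_
    · have : r - ((E.vec a).1 : ℝ) = 0 := by
        rcases mul_eq_zero.1 h1 with h | h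
        · exact absurd h (by rw [hMab]; exact hMpos.ne')
        · exact h
      push_cast
      linarith
    · have : s - ((E.vec a).2 : ℝ) = 0 := by
        rcases mul_eq_zero.1 h2 with h | h
        · exact absurd h (by rw [hMab]; exact hMpos.ne')
        · exact h
      push_cast
      linarith
  · rw [Finset.sum_pair hab] at h1 h2 hMab
    refine key_rel r s hirr 1 one_pos (E.vec b) (E.vec a - E.vec b) (c a / M) ?_ ?_
    · rw [Prod.fst_sub]
      push_cast
      field_simp
      linear_combination h1 + (((E.vec b).1 : ℝ) - r) * hMab
    · rw [Prod.snd_sub]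
      push_cast
      field_simp
      linear_combination h2 + (((E.vec b).2 : ℝ) - s) * hMab

lemma univ_inv : ((Set.univ : Set (ℝ × ℝ))) =ᵐ[E.nu] ((E.R ⁻¹' Set.univ : Set (ℝ × ℝ))) := by
  rw [Set.preimage_univ]
  exact Filter.EventuallyEq.rfl

lemma drift_fst_univ :
    ∑ i, (E.mu i).toReal * (r - ((E.vec i).1 : ℝ)) = 0 := by
  have := drift_fst r s E Set.univ MeasurableSet.univ (univ_inv r s E)
  simpa [Set.univ_inter, PieceExchange.mu] using this

lemma drift_snd_univ :
    ∑ i, (E.mu i).toReal * (s - ((E.vec i).2 : ℝ)) = 0 := by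
  have := drift_snd r s E Set.univ MeasurableSet.univ (univ_inv r s E)
  simpa [Set.univ_inter, PieceExchange.mu] using this

lemma sum_mu_toReal : ∑ i, (E.mu i).toReal = 1 := by
  have : ∑ i, (E.mu i).toReal = ((∑ i, E.mu i : ENNReal)).toReal := by
    rw [ENNReal.toReal_sum]
    intro a _
    exact E.nu_lt_top _
  rw [this, E.sum_mu, ENNReal.toReal_one]

/-- The three-letter endgame with one extra rational relation among the masses:
`μ p = μ q` (shape I) -/
lemma shapeI_contra
    (hirr : ∀ p q : ℤ, (p, q) ≠ (0, 0) → ∀ k : ℤ, (p : ℝ) * r + (q : ℝ) * s ≠ (k : ℝ))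
    (p q l : Fin m) (hpq : p ≠ q) (hpl : p ≠ l) (hql : q ≠ l)
    (hz : ∀ i, i ≠ p → i ≠ q → i ≠ l → E.mu i = 0)
    (hrel : (E.mu p).toReal = (E.mu q).toReal) : False := by
  classical
  set c : Fin m → ℝ := fun i => (E.mu i).toReal with hc
  have hvanish : ∀ u : Fin m → ℝ, ∀ i ∈ Finset.univ,
      i ∉ ({p, q, l} : Finset (Fin m)) → c i * u i = 0 := by
    intro u i _ hi
    simp only [Finset.mem_insert, Finset.mem_singleton] at hi
    push_neg at hi
    rw [hc]
    simp only
    rw [hz i hi.1 hi.2.1 hi.2.2, ENNReal.toReal_zero, zero_mul]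
  have hredsum : ∀ u : Fin m → ℝ,
      ∑ i, c i * u i = ∑ i ∈ ({p, q, l} : Finset (Fin m)), c i * u i := by
    intro u
    exact (Finset.sum_subset (Finset.subset_univ _) (hvanish u)).symm
  have hsum3 : c p + c q + c l = 1 := by
    have h0 := sum_mu_toReal r s E
    have : ∑ i, c i * (fun _ => (1:ℝ)) i = ∑ i ∈ ({p, q, l} : Finset (Fin m)), c i * 1 :=
      hredsum (fun _ => 1)
    simp only [mul_one] at this
    rw [Finset.sum_insert (by simp [hpq, hpl]), Finset.sum_pair hql] at this
    rw [← add_assoc] at this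
    rw [← this]
    exact h0
  have h1 := drift_fst_univ r s E
  have h2 := drift_snd_univ r s E
  rw [hredsum (fun i => r - ((E.vec i).1 : ℝ)),
    Finset.sum_insert (by simp [hpq, hpl]), Finset.sum_pair hql] at h1
  rw [hredsum (fun i => s - ((E.vec i).2 : ℝ)),
    Finset.sum_insert (by simp [hpq, hpl]), Finset.sum_pair hql] at h2
  refine key_rel r s hirr 1 one_pos (E.vec l) (E.vec p + E.vec q - E.vec l - E.vec l)
    (c p) ?_ ?_
  · simp only [Prod.fst_sub, Prod.fst_add]
    push_cast
    have hrel' : c p = c q := hrel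
    linear_combination h1 + (((E.vec l).1 : ℝ) - r) * hsum3
      + (((E.vec l).1 : ℝ) - ((E.vec q).1 : ℝ)) * hrel'
  · simp only [Prod.snd_sub, Prod.snd_add]
    push_cast
    have hrel' : c p = c q := hrel
    linear_combination h2 + (((E.vec l).2 : ℝ) - s) * hsum3
      + (((E.vec l).2 : ℝ) - ((E.vec q).2 : ℝ)) * hrel'

/-- Shape II : `μ i = μ j + μ l`. -/
lemma shapeII_contra
    (hirr : ∀ p q : ℤ, (p, q) ≠ (0, 0) → ∀ k : ℤ, (p : ℝ) * r + (q : ℝ) * s ≠ (k : ℝ))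
    (p q l : Fin m) (hpq : p ≠ q) (hpl : p ≠ l) (hql : q ≠ l)
    (hz : ∀ i, i ≠ p → i ≠ q → i ≠ l → E.mu i = 0)
    (hrel : (E.mu p).toReal = (E.mu q).toReal + (E.mu l).toReal) : False := by
  classical
  set c : Fin m → ℝ := fun i => (E.mu i).toReal with hc
  have hvanish : ∀ u : Fin m → ℝ, ∀ i ∈ Finset.univ,
      i ∉ ({p, q, l} : Finset (Fin m)) → c i * u i = 0 := by
    intro u i _ hi
    simp only [Finset.mem_insert, Finset.mem_singleton] at hi
    push_neg at hi
    rw [hc]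
    simp only
    rw [hz i hi.1 hi.2.1 hi.2.2, ENNReal.toReal_zero, zero_mul]
  have hredsum : ∀ u : Fin m → ℝ,
      ∑ i, c i * u i = ∑ i ∈ ({p, q, l} : Finset (Fin m)), c i * u i := by
    intro u
    exact (Finset.sum_subset (Finset.subset_univ _) (hvanish u)).symm
  have hsum3 : c p + c q + c l = 1 := by
    have h0 := sum_mu_toReal r s E
    have : ∑ i, c i * (fun _ => (1:ℝ)) i = ∑ i ∈ ({p, q, l} : Finset (Fin m)), c i * 1 :=
      hredsum (fun _ => 1)
    simp only [mul_one] at this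
    rw [Finset.sum_insert (by simp [hpq, hpl]), Finset.sum_pair hql] at this
    rw [← add_assoc] at this
    rw [← this]
    exact h0
  have h1 := drift_fst_univ r s E
  have h2 := drift_snd_univ r s E
  rw [hredsum (fun i => r - ((E.vec i).1 : ℝ)),
    Finset.sum_insert (by simp [hpq, hpl]), Finset.sum_pair hql] at h1
  rw [hredsum (fun i => s - ((E.vec i).2 : ℝ)),
    Finset.sum_insert (by simp [hpq, hpl]), Finset.sum_pair hql] at h2
  refine key_rel r s hirr 2 two_pos (E.vec p + E.vec l) (E.vec q - E.vec l + (E.vec q - E.vec l))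
    (c q) ?_ ?_
  · simp only [Prod.fst_sub, Prod.fst_add]
    push_cast
    have hrel' : c p = c q + c l := hrel
    linear_combination 2 * h1 + (((E.vec p).1 : ℝ) + ((E.vec l).1 : ℝ) - 2*r) * hsum3
      + (((E.vec p).1 : ℝ) - ((E.vec l).1 : ℝ)) * hrel'
  · simp only [Prod.snd_sub, Prod.snd_add]
    push_cast
    have hrel' : c p = c q + c l := hrel
    linear_combination 2 * h2 + (((E.vec p).2 : ℝ) + ((E.vec l).2 : ℝ) - 2*s) * hsum3
      + (((E.vec p).2 : ℝ) - ((E.vec l).2 : ℝ)) * hrel'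

/-- Case where the branching vertex `a` receives no edge from itself
(the third vertex `j₀` is `a` itself). -/
lemma helper_A
    (hirr : ∀ p q : ℤ, (p, q) ≠ (0, 0) → ∀ k : ℤ, (p : ℝ) * r + (q : ℝ) * s ≠ (k : ℝ))
    (a b c : Fin m) (hab : a ≠ b) (hac : a ≠ c) (hbc : b ≠ c)
    (hPz : ∀ i, i ≠ a → i ≠ b → i ≠ c → E.mu i = 0)
    (hmua : E.mu a ≠ 0) (hmub : E.mu b ≠ 0) (hmuc : E.mu c ≠ 0)
    (β γ : Fin m) (hb : ∀ j, E.mij b j ≠ 0 → j = β) (hcg : ∀ j, E.mij c j ≠ 0 → j = γ)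
    (hnoa : ∀ j, E.mij a j ≠ 0 → j ≠ a) : False := by
  have hcola := E.col3 a b c hab hac hbc hPz a
  have haa : E.mij a a = 0 := by
    by_contra h
    exact (hnoa a h) rfl
  rw [haa, zero_add] at hcola
  by_cases hβ : β = a
  · have hba : E.mij b a = E.mu b := by
      have := E.row1 b β hb
      rw [hβ] at this
      exact this.symm
    by_cases hγ : γ = a
    · have hca : E.mij c a = E.mu c := by
        have := E.row1 c γ hcg
        rw [hγ] at this
        exact this.symm
      rw [hba, hca] at hcola
      refine shapeII_contra r s E hirr a b c hab hac hbc hPz ?_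
      rw [hcola, ENNReal.toReal_add (E.mu_ne_top b) (E.mu_ne_top c)]
    · have hca : E.mij c a = 0 := E.mij_single hcg (fun h => hγ h.symm)
      rw [hba, hca, add_zero] at hcola
      exact shapeI_contra r s E hirr a b c hab hac hbc hPz (by rw [hcola])
  · have hba : E.mij b a = 0 := E.mij_single hb (fun h => hβ h.symm)
    by_cases hγ : γ = a
    · have hca : E.mij c a = E.mu c := by
        have := E.row1 c γ hcg
        rw [hγ] at this
        exact this.symm
      rw [hba, hca, zero_add] at hcola
      exact shapeI_contra r s E hirr a c b hac hab hbc.symm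
        (fun i h1 h2 h3 => hPz i h1 h3 h2) (by rw [hcola])
    · have hca : E.mij c a = 0 := E.mij_single hcg (fun h => hγ h.symm)
      rw [hba, hca, add_zero] at hcola
      exact hmua hcola

/-- Case where the third vertex `j₀` is the (out-degree one) vertex `b`. -/
lemma helper_B
    (hirr : ∀ p q : ℤ, (p, q) ≠ (0, 0) → ∀ k : ℤ, (p : ℝ) * r + (q : ℝ) * s ≠ (k : ℝ))
    (a b c : Fin m) (hab : a ≠ b) (hac : a ≠ c) (hbc : b ≠ c)
    (hPz : ∀ i, i ≠ a → i ≠ b → i ≠ c → E.mu i = 0)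
    (hmua : E.mu a ≠ 0) (hmub : E.mu b ≠ 0) (hmuc : E.mu c ≠ 0)
    (β γ : Fin m) (hb : ∀ j, E.mij b j ≠ 0 → j = β) (hcg : ∀ j, E.mij c j ≠ 0 → j = γ)
    (hnob : ∀ j, E.mij a j ≠ 0 → j ≠ b) : False := by
  have hcolb := E.col3 a b c hab hac hbc hPz b
  have hab0 : E.mij a b = 0 := by
    by_contra h
    exact (hnob b h) rfl
  rw [hab0, zero_add] at hcolb
  by_cases hβ : β = b
  · by_cases hγ : γ = b
    · have hcb : E.mij c b = E.mu c := by
        have := E.row1 c γ hcg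
        rw [hγ] at this
        exact this.symm
      have hbb : E.mij b b = E.mu b := by
        have := E.row1 b β hb
        rw [hβ] at this
        exact this.symm
      rw [hbb, hcb] at hcolb
      have h0 : E.mu b + 0 = E.mu b + E.mu c := by
        rw [add_zero]
        exact hcolb
      exact hmuc ((ENNReal.add_right_inj (E.mu_ne_top b)).mp h0).symm
    · -- closed class at b
      have hout : ∀ j, j ≠ b → E.mij b j = 0 := fun j hj =>
        E.mij_single hb (by rw [hβ]; exact hj)
      have hin : ∀ i, i ≠ b → E.mij i b = 0 := by
        intro i hi
        by_cases hia : i = a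
        · rw [hia]; exact hab0
        · by_cases hic : i = c
          · rw [hic]; exact E.mij_single hcg (fun h => hγ h.symm)
          · exact E.mij_zero_of_mu_left (hPz i hia hi hic) b
      have hinv := E.cls_closed_invariant b hout hin
      refine two_letter_contra r s E hirr (E.cls 0 b) (E.measCls 0 b) hinv hmub b b ?_
      intro i hi _
      have hempty : E.cls 0 b ∩ E.cls 0 i = ∅ := by
        ext z
        simp only [Set.mem_inter_iff, Set.mem_empty_iff_false, iff_false, not_and]
        intro h1 h2
        exact hi (h2 ▸ h1 ▸ rfl)
      rw [hempty, measure_empty]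
  · have hbb : E.mij b b = 0 := E.mij_single hb (fun h => hβ h.symm)
    by_cases hγ : γ = b
    · have hcb : E.mij c b = E.mu c := by
        have := E.row1 c γ hcg
        rw [hγ] at this
        exact this.symm
      rw [hbb, hcb, zero_add] at hcolb
      exact shapeI_contra r s E hirr b c a hbc hab.symm hac.symm
        (fun i h1 h2 h3 => hPz i h3 h1 h2) (by rw [hcolb])
    · have hcb : E.mij c b = 0 := E.mij_single hcg (fun h => hγ h.symm)
      rw [hbb, hcb, add_zero] at hcolb
      exact hmub hcolb

/-- The master theorem: no piece exchange conjugate to the totally irrational translation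
has complexity at most 4 at length 2. -/
theorem master_contra
    (hirr : ∀ p q : ℤ, (p, q) ≠ (0, 0) → ∀ k : ℤ, (p : ℝ) * r + (q : ℝ) * s ≠ (k : ℝ))
    (hconj : E.Conjugate) (hcomp : E.complexity 2 ≤ 4) : False := by
  classical
  by_cases hdet : ∀ i j j', E.mij i j ≠ 0 → E.mij i j' ≠ 0 → j = j'
  · refine E.deterministic_contra hconj
      (fun i => if h : ∃ j, E.mij i j ≠ 0 then h.choose else i) (fun i j hij => ?_)
    have hex : ∃ j, E.mij i j ≠ 0 := ⟨j, hij⟩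
    show j = (if h : ∃ j, E.mij i j ≠ 0 then h.choose else i)
    rw [dif_pos hex]
    exact hdet i j hex.choose hij hex.choose_spec
  · push_neg at hdet
    obtain ⟨a, x, y, hax, hay, hxy⟩ := hdet
    set Eset := Finset.univ.filter (fun p : Fin m × Fin m => E.mij p.1 p.2 ≠ 0) with hEs
    have hEcard : Eset.card ≤ 4 :=
      le_trans (E.edge_card_le Eset (fun p hp => (Finset.mem_filter.mp hp).2)) hcomp
    set fib : Fin m → Finset (Fin m × Fin m) := fun i => Eset.filter (fun p => p.1 = i)
      with hfibdef
    have hsumfib : ∑ i, (fib i).card = Eset.card :=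
      (Finset.card_eq_sum_card_fiberwise (f := Prod.fst) (t := Finset.univ)
        (fun p _ => Finset.mem_univ p.1)).symm
    have hfibmem : ∀ i j, ((i, j) ∈ fib i ↔ E.mij i j ≠ 0) := by
      intro i j
      simp [hfibdef, hEs]
    set Pset := Finset.univ.filter (fun i => E.mu i ≠ 0) with hPs
    have hfib1 : ∀ i ∈ Pset, 1 ≤ (fib i).card := by
      intro i hi
      have hμ := (Finset.mem_filter.mp hi).2
      have hex : ∃ j, E.mij i j ≠ 0 := by
        by_contra hno
        push_neg at hno
        refine hμ ?_
        rw [← E.sum_mij_right i]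
        exact Finset.sum_eq_zero (fun j _ => hno j)
      obtain ⟨j, hj⟩ := hex
      exact Finset.card_pos.mpr ⟨(i, j), (hfibmem i j).mpr hj⟩
    have hsuba : ({(a, x), (a, y)} : Finset (Fin m × Fin m)) ⊆ fib a := by
      intro p hp
      simp only [Finset.mem_insert, Finset.mem_singleton] at hp
      rcases hp with hp | hp <;> subst hp
      · exact (hfibmem a x).mpr hax
      · exact (hfibmem a y).mpr hay
    have hfiba : 2 ≤ (fib a).card := by
      calc 2 = ({(a, x), (a, y)} : Finset (Fin m × Fin m)).card :=
            (Finset.card_pair (by simp [hxy])).symm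
        _ ≤ _ := Finset.card_le_card hsuba
    have hfib0 : ∀ i, i ∉ Pset → (fib i).card = 0 := by
      intro i hi
      rw [Finset.card_eq_zero, Finset.eq_empty_iff_forall_notMem]
      intro p hp
      have h1 : p.1 = i := (Finset.mem_filter.mp hp).2
      have h2 : E.mij p.1 p.2 ≠ 0 := (Finset.mem_filter.mp (Finset.mem_filter.mp hp).1).2
      have hμ : E.mu i = 0 := by
        by_contra h
        exact hi (Finset.mem_filter.mpr ⟨Finset.mem_univ i, h⟩)
      exact h2 (h1 ▸ E.mij_zero_of_mu_left hμ p.2)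
    have haP : a ∈ Pset :=
      Finset.mem_filter.mpr ⟨Finset.mem_univ a, (E.mu_pos_of_mij hax).1⟩
    have hsplit : ∑ i, (fib i).card = ∑ i ∈ Pset, (fib i).card :=
      (Finset.sum_subset (Finset.subset_univ _) (fun i _ hi => hfib0 i hi)).symm
    have herase : ∑ i ∈ Pset, (fib i).card
        = (fib a).card + ∑ i ∈ Pset.erase a, (fib i).card :=
      (Finset.add_sum_erase _ _ haP).symm
    have herasebound : (Pset.erase a).card ≤ ∑ i ∈ Pset.erase a, (fib i).card := by
      calc (Pset.erase a).card = ∑ _i ∈ Pset.erase a, 1 := by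
            rw [Finset.card_eq_sum_ones]
        _ ≤ _ := Finset.sum_le_sum (fun i hi => hfib1 i (Finset.mem_of_mem_erase hi))
    have hPcard3 : Pset.card ≤ 3 := by
      have h1 : (Pset.erase a).card = Pset.card - 1 := Finset.card_erase_of_mem haP
      have h2 : 1 ≤ Pset.card := Finset.card_pos.mpr ⟨a, haP⟩
      omega
    by_cases hP3 : Pset.card = 3
    · have h2 : (Pset.erase a).card = 2 := by
        rw [Finset.card_erase_of_mem haP, hP3]
      obtain ⟨b, c, hbc, hbceq⟩ := Finset.card_eq_two.mp h2
      have hbmem : b ∈ Pset.erase a := hbceq ▸ Finset.mem_insert_self b {c}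
      have hcmem : c ∈ Pset.erase a := hbceq ▸ by simp
      have hbP : b ∈ Pset := Finset.mem_of_mem_erase hbmem
      have hcP : c ∈ Pset := Finset.mem_of_mem_erase hcmem
      have hba : b ≠ a := Finset.ne_of_mem_erase hbmem
      have hca : c ≠ a := Finset.ne_of_mem_erase hcmem
      have hab : a ≠ b := hba.symm
      have hac : a ≠ c := hca.symm
      have hmua : E.mu a ≠ 0 := (Finset.mem_filter.mp haP).2
      have hmub : E.mu b ≠ 0 := (Finset.mem_filter.mp hbP).2
      have hmuc : E.mu c ≠ 0 := (Finset.mem_filter.mp hcP).2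
      have hPz : ∀ i, i ≠ a → i ≠ b → i ≠ c → E.mu i = 0 := by
        intro i h1 h2' h3
        by_contra h
        have hiP : i ∈ Pset := Finset.mem_filter.mpr ⟨Finset.mem_univ i, h⟩
        have : i ∈ Pset.erase a := Finset.mem_erase.mpr ⟨h1, hiP⟩
        rw [hbceq] at this
        simp only [Finset.mem_insert, Finset.mem_singleton] at this
        rcases this with h' | h'
        · exact h2' h'
        · exact h3 h'
      -- degrees are forced
      have hsplit3 : ∑ i ∈ Pset, (fib i).card
          = (fib a).card + ((fib b).card + (fib c).card) := by
        have hPeq : Pset = insert a ({b, c} : Finset (Fin m)) := by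
          rw [← hbceq, Finset.insert_erase haP]
        rw [hPeq, Finset.sum_insert (by simp [hba.symm, hca.symm]), Finset.sum_pair hbc]
      have hfibb1 : 1 ≤ (fib b).card := hfib1 b hbP
      have hfibc1 : 1 ≤ (fib c).card := hfib1 c hcP
      have htot : ∑ i, (fib i).card ≤ 4 := hsumfib ▸ hEcard
      rw [hsplit, hsplit3] at htot
      have hdega : (fib a).card = 2 := by omega
      have hdegb : (fib b).card = 1 := by omega
      have hdegc : (fib c).card = 1 := by omega
      obtain ⟨pb, hpb⟩ := Finset.card_eq_one.mp hdegb
      obtain ⟨pc, hpc⟩ := Finset.card_eq_one.mp hdegc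
      set β := pb.2 with hβdef
      set γ := pc.2 with hγdef
      have hb : ∀ j, E.mij b j ≠ 0 → j = β := by
        intro j hj
        have : (b, j) ∈ fib b := (hfibmem b j).mpr hj
        rw [hpb, Finset.mem_singleton] at this
        rw [hβdef, ← this]
      have hcg : ∀ j, E.mij c j ≠ 0 → j = γ := by
        intro j hj
        have : (c, j) ∈ fib c := (hfibmem c j).mpr hj
        rw [hpc, Finset.mem_singleton] at this
        rw [hγdef, ← this]
      have hfa : ({(a, x), (a, y)} : Finset (Fin m × Fin m)) = fib a :=
        Finset.eq_of_subset_of_card_le hsuba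
          (by rw [hdega, Finset.card_pair (by simp [hxy])])
      have hao : ∀ j, E.mij a j ≠ 0 → j = x ∨ j = y := by
        intro j hj
        have : (a, j) ∈ fib a := (hfibmem a j).mpr hj
        rw [← hfa] at this
        simp only [Finset.mem_insert, Finset.mem_singleton, Prod.mk.injEq] at this
        rcases this with ⟨_, h'⟩ | ⟨_, h'⟩
        · exact Or.inl h'
        · exact Or.inr h'
      have hmem3 : ∀ z, E.mu z ≠ 0 → (z = a ∨ z = b ∨ z = c) := by
        intro z hz
        by_contra h
        push_neg at h
        exact hz (hPz z h.1 h.2.1 h.2.2)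
      have hx3 := hmem3 x (E.mu_pos_of_mij hax).2
      have hy3 := hmem3 y (E.mu_pos_of_mij hay).2
      -- a convenient characterization of a's out-neighbours
      have hnoa : ∀ v : Fin m, v ≠ x → v ≠ y → (∀ j, E.mij a j ≠ 0 → j ≠ v) := by
        intro v hvx hvy j hj hjv
        rcases hao j hj with h' | h'
        · exact hvx (hjv ▸ h')
        · exact hvy (hjv ▸ h')
      rcases hx3 with hx' | hx' | hx' <;> rcases hy3 with hy' | hy' | hy'
      · exact hxy (hx'.trans hy'.symm)
      · -- x = a, y = b, third vertex c
        exact helper_B r s E hirr a c b hac hab hbc.symm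
          (fun i h1 h2' h3 => hPz i h1 h3 h2') hmua hmuc hmub γ β hcg hb
          (hnoa c (by rw [hx']; exact hca) (by rw [hy']; exact hbc.symm))
      · -- x = a, y = c, third vertex b
        exact helper_B r s E hirr a b c hab hac hbc hPz hmua hmub hmuc β γ hb hcg
          (hnoa b (by rw [hx']; exact hba) (by rw [hy']; exact hbc))
      · -- x = b, y = a, third c
        exact helper_B r s E hirr a c b hac hab hbc.symm
          (fun i h1 h2' h3 => hPz i h1 h3 h2') hmua hmuc hmub γ β hcg hb
          (hnoa c (by rw [hx']; exact hbc.symm) (by rw [hy']; exact hca))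
      · exact hxy (hx'.trans hy'.symm)
      · -- x = b, y = c, third a
        exact helper_A r s E hirr a b c hab hac hbc hPz hmua hmub hmuc β γ hb hcg
          (hnoa a (by rw [hx']; exact hab) (by rw [hy']; exact hac))
      · -- x = c, y = a : third b
        exact helper_B r s E hirr a b c hab hac hbc hPz hmua hmub hmuc β γ hb hcg
          (hnoa b (by rw [hx']; exact hbc) (by rw [hy']; exact hba))
      · -- x = c, y = b : third a
        exact helper_A r s E hirr a b c hab hac hbc hPz hmua hmub hmuc β γ hb hcg
          (hnoa a (by rw [hx']; exact hac) (by rw [hy']; exact hab))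
      · exact hxy (hx'.trans hy'.symm)
    · -- at most two letters
      have hP2 : Pset.card ≤ 2 := by omega
      have hP1 : 1 ≤ Pset.card := Finset.card_pos.mpr ⟨a, haP⟩
      obtain ⟨a', b', hsub2⟩ : ∃ a' b' : Fin m, ∀ i ∈ Pset, i = a' ∨ i = b' := by
        interval_cases h : Pset.card
        · obtain ⟨a', ha'⟩ := Finset.card_eq_one.mp h
          exact ⟨a', a', fun i hi => Or.inl (Finset.mem_singleton.mp (ha' ▸ hi))⟩
        · obtain ⟨a', b', _, hab'⟩ := Finset.card_eq_two.mp h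
          refine ⟨a', b', fun i hi => ?_⟩
          rw [hab'] at hi
          simpa using hi
      refine two_letter_contra r s E hirr Set.univ MeasurableSet.univ (univ_inv r s E)
        ?_ a' b' ?_
      · rw [E.nu_univ]
        exact one_ne_zero
      · intro i h1 h2
        rw [Set.univ_inter]
        by_contra h
        rcases hsub2 i (Finset.mem_filter.mpr ⟨Finset.mem_univ i, h⟩) with h' | h'
        · exact h1 h'
        · exact h2 h'

end Translation

/-- The complexity function associated to `T`: the infimum of the complexities of the
exchanges of pieces conjugate to `T` (`⊤` if there is no such exchange). -/
def complexityFn (T : ℝ × ℝ → ℝ × ℝ) (n : ℕ) : ℕ∞ :=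
  ⨅ (m : ℕ) (E : PieceExchange T m) (_ : E.Conjugate), (E.complexity n : ℕ∞)


/-- If `r, s` are reals with `n r + m s ∉ ℤ` for every pair of integers
`(n, m) ≠ (0, 0)` and `T (x,y) = (x+r, y+s)`, then there is no exchange of three pieces
conjugate to `T` whose complexity at `2` is at most `4`; combined with `p^T(1) ≥ 3` and strict
monotonicity of the complexity this gives `p^T(2) ≥ 5`. -/
theorem no_three_piece_exchange_low_complexity (r s : ℝ)
    (hirr : ∀ p q : ℤ, (p, q) ≠ (0, 0) → ∀ k : ℤ, (p : ℝ) * r + (q : ℝ) * s ≠ (k : ℝ)) :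
    (¬ ∃ E : PieceExchange (fun x : ℝ × ℝ => (x.1 + r, x.2 + s)) 3,
      E.Conjugate ∧ E.complexity 2 ≤ 4) ∧
    (5 : ℕ∞) ≤ complexityFn (fun x : ℝ × ℝ => (x.1 + r, x.2 + s)) 2 := by
  constructor
  · rintro ⟨E, hconj, hcomp⟩
    exact master_contra r s E hirr hconj hcomp
  · rw [complexityFn]
    refine le_iInf fun m => le_iInf fun E => le_iInf fun hconj => ?_
    by_contra h
    push_neg at h
    have h4 : E.complexity 2 ≤ 4 := by
      have : E.complexity 2 < 5 := by exact_mod_cast h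
      omega
    exact master_contra r s E hirr hconj h4

end
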